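/- Let T = (V, L) be a locally finite tree, p a prime and q ≥ 2. For each directed edge (v,x) let Q_{(v,x)}(j,i) ∈ ℚ_p (j,i ∈ {1,…,q}) satisfy |Q_{(v,x)}(j,i)|_p ≤ 1 and |Q_{(v,x)}(j,i) − Q_{(v,x)}(j,q)|_p ≤ 1/p for all i,j. Suppose z assigns to each directed edge a vector (z_1, …, z_{q−1}) with all |z_i − 1|_p ≤ 1/p, satisfying for every directed edge (x,y) and every i: z_i(x,y) = ∏_{v ∈ ∂{x}∖{y}} [1 + Σ_{j=1}^{q−1}(z_j(v,x) − 1)Q_{(v,x)}(j,i)] / [1 + Σ_{j=1}^{q−1}(z_j(v,x) − 1)Q_{(v,x)}(j,q)]. If (x,y) is a directed edge with ∂{x}∖{y} nonempty, then max_{1≤i≤q−1} |z_i(x,y) − 1|_p ≤ (1/p) · max_{v ∈ ∂{x}∖{y}} max_{1≤j≤q−1} |z_j(v,x) − 1|_p. -/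

import Mathlib

private lemma padic_prod_sub_one_norm_le {p : ℕ} [Fact p.Prime] {ι : Type*}
    [DecidableEq ι] (s : Finset ι) (f : ι → ℚ_[p]) {c : ℝ}
    (hc0 : 0 ≤ c) (hc1 : c ≤ 1) (h : ∀ v ∈ s, ‖f v - 1‖ ≤ c) :
    ‖∏ v ∈ s, f v - 1‖ ≤ c := by
  induction s using Finset.cons_induction with
  | empty => simpa using hc0
  | cons a s ha ih =>
    rw [Finset.prod_cons]
    have hfa : ‖f a - 1‖ ≤ c := h a (Finset.mem_cons_self a s)
    have hP : ‖∏ v ∈ s, f v - 1‖ ≤ c :=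
      ih fun v hv => h v (Finset.mem_cons_of_mem hv)
    have hfa1 : ‖f a‖ ≤ 1 := by
      calc ‖f a‖ = ‖(f a - 1) + 1‖ := by ring_nf
        _ ≤ max ‖f a - 1‖ ‖(1 : ℚ_[p])‖ := Padic.nonarchimedean _ _
        _ ≤ 1 := by rw [norm_one]; exact max_le (hfa.trans hc1) le_rfl
    calc ‖f a * ∏ v ∈ s, f v - 1‖
        = ‖f a * (∏ v ∈ s, f v - 1) + (f a - 1)‖ := by ring_nf
      _ ≤ max ‖f a * (∏ v ∈ s, f v - 1)‖ ‖f a - 1‖ := Padic.nonarchimedean _ _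
      _ ≤ c := by
          refine max_le ?_ hfa
          rw [norm_mul]
          calc ‖f a‖ * ‖∏ v ∈ s, f v - 1‖ ≤ 1 * c := by
                exact mul_le_mul hfa1 hP (norm_nonneg _) zero_le_one
            _ = c := one_mul c

/-- The contraction estimate (4.8)/(4.9) in the proof of Theorem 4.2: on a locally finite
tree, with `q = n + 1 ≥ 2` spin values (the last index `Fin.last n` playing the role of `q`),
if `|Q_{(v,x)}(j,i)|_p ≤ 1`, `|Q_{(v,x)}(j,i) − Q_{(v,x)}(j,q)|_p ≤ 1/p`, and `z` is a
boundary law with `|z_i(x,y) − 1|_p ≤ 1/p`, then for any directed edge `(x,y)` with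
`∂{x}∖{y}` nonempty,
`max_i |z_i(x,y) − 1|_p ≤ (1/p) · max_{v ∈ ∂{x}∖{y}} max_j |z_j(v,x) − 1|_p`. -/
theorem padic_boundary_law_contraction
    {V : Type*} [DecidableEq V] (G : SimpleGraph V)
    [∀ v : V, Fintype (G.neighborSet v)]
    (hT : G.IsTree)
    (p : ℕ) [Fact p.Prime] (n : ℕ) (hn : 1 ≤ n)
    (Q : V → V → Fin (n + 1) → Fin (n + 1) → ℚ_[p])
    (hQ1 : ∀ v x : V, G.Adj v x → ∀ j i, ‖Q v x j i‖ ≤ 1)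
    (hQ2 : ∀ v x : V, G.Adj v x → ∀ j i,
      ‖Q v x j i - Q v x j (Fin.last n)‖ ≤ 1 / (p : ℝ))
    (z : V → V → Fin n → ℚ_[p])
    (hz : ∀ x y : V, G.Adj x y → ∀ i, ‖z x y i - 1‖ ≤ 1 / (p : ℝ))
    (hbl : ∀ x y : V, G.Adj x y → ∀ i : Fin n,
      z x y i = ∏ v ∈ (G.neighborFinset x).erase y,
        (1 + ∑ j : Fin n, (z v x j - 1) * Q v x j.castSucc i.castSucc) /
        (1 + ∑ j : Fin n, (z v x j - 1) * Q v x j.castSucc (Fin.last n)))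
    (x y : V) (hxy : G.Adj x y) (hne : ((G.neighborFinset x).erase y).Nonempty) :
    Finset.univ.sup' (Finset.univ_nonempty_iff.mpr ⟨⟨0, hn⟩⟩)
        (fun i : Fin n => ‖z x y i - 1‖) ≤
      (1 / (p : ℝ)) *
        ((G.neighborFinset x).erase y).sup' hne
          (fun v => Finset.univ.sup' (Finset.univ_nonempty_iff.mpr ⟨⟨0, hn⟩⟩)
            (fun j : Fin n => ‖z v x j - 1‖)) := by
  have hp2 : 2 ≤ p := (Fact.out : p.Prime).two_le
  have hppos : (0 : ℝ) < p := by exact_mod_cast Nat.lt_of_lt_of_le (by norm_num) hp2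
  have hppos' : (0 : ℝ) < 1 / p := by positivity
  have hple : (1 : ℝ) / p ≤ 1 := by
    rw [div_le_one hppos]; exact_mod_cast Nat.one_le_of_lt hp2
  set S := (G.neighborFinset x).erase y with hS
  set M := S.sup' hne
      (fun v => Finset.univ.sup' (Finset.univ_nonempty_iff.mpr ⟨⟨0, hn⟩⟩)
        (fun j : Fin n => ‖z v x j - 1‖)) with hM
  have hadj : ∀ v ∈ S, G.Adj v x := fun v hv =>
    ((G.mem_neighborFinset x v).mp (Finset.mem_of_mem_erase hv)).symm
  have hzM : ∀ v ∈ S, ∀ j : Fin n, ‖z v x j - 1‖ ≤ M := by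
    intro v hv j
    have h1 : ‖z v x j - 1‖ ≤
        Finset.univ.sup' (Finset.univ_nonempty_iff.mpr ⟨⟨0, hn⟩⟩)
          (fun j : Fin n => ‖z v x j - 1‖) :=
      Finset.le_sup' (fun j : Fin n => ‖z v x j - 1‖) (Finset.mem_univ j)
    exact h1.trans (Finset.le_sup'
      (fun v => Finset.univ.sup' (Finset.univ_nonempty_iff.mpr ⟨⟨0, hn⟩⟩)
        (fun j : Fin n => ‖z v x j - 1‖)) hv)
  have hM0 : 0 ≤ M := by
    obtain ⟨v, hv⟩ := hne
    exact le_trans (norm_nonneg _) (hzM v hv ⟨0, hn⟩)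
  have hMp : M ≤ 1 / p := by
    refine Finset.sup'_le _ _ fun v hv => Finset.sup'_le _ _ fun j _ =>
      hz v x (hadj v hv) j
  refine Finset.sup'_le _ _ fun i _ => ?_
  rw [hbl x y hxy i]
  refine padic_prod_sub_one_norm_le _ _ (by positivity)
    (le_trans (mul_le_mul hple (hMp.trans hple) hM0 zero_le_one) (by norm_num))
    fun v hv => ?_
  have hvx := hadj v hv
  set A : ℚ_[p] := ∑ j : Fin n, (z v x j - 1) * Q v x j.castSucc i.castSucc with hA
  set B : ℚ_[p] := ∑ j : Fin n, (z v x j - 1) * Q v x j.castSucc (Fin.last n) with hB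
  have hBnorm : ‖B‖ ≤ 1 / p := by
    refine IsUltrametricDist.norm_sum_le_of_forall_le_of_nonneg (le_of_lt hppos')
      fun j _ => ?_
    rw [norm_mul]
    calc ‖z v x j - 1‖ * ‖Q v x j.castSucc (Fin.last n)‖ ≤ (1 / p) * 1 :=
          mul_le_mul (hz v x hvx j) (hQ1 v x hvx _ _) (norm_nonneg _) (le_of_lt hppos')
      _ = 1 / p := mul_one _
  have hden : ‖(1 : ℚ_[p]) + B‖ = 1 := by
    have hB1 : ‖B‖ < 1 := lt_of_le_of_lt hBnorm (by
      rw [div_lt_one hppos]; exact_mod_cast Nat.lt_of_lt_of_le (by norm_num) hp2)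
    have h1 : (1 : ℝ) ≤ ‖(1 : ℚ_[p]) + B‖ := by
      have := Padic.nonarchimedean (1 + B) (-B)
      simp only [add_neg_cancel_right, norm_neg, norm_one] at this
      rcases max_cases ‖1 + B‖ ‖B‖ with ⟨h, _⟩ | ⟨h, _⟩
      · rw [h] at this; exact this
      · rw [h] at this; linarith
    have h2 : ‖(1 : ℚ_[p]) + B‖ ≤ 1 := by
      have := Padic.nonarchimedean (1 : ℚ_[p]) B
      rw [norm_one] at this
      exact this.trans (max_le le_rfl (le_of_lt hB1))
    linarith
  have hden0 : (1 : ℚ_[p]) + B ≠ 0 := by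
    intro h; rw [h, norm_zero] at hden; norm_num at hden
  have hdiff : ‖A - B‖ ≤ (1 / p) * M := by
    have : A - B = ∑ j : Fin n,
        (z v x j - 1) * (Q v x j.castSucc i.castSucc - Q v x j.castSucc (Fin.last n)) := by
      rw [hA, hB, ← Finset.sum_sub_distrib]
      exact Finset.sum_congr rfl fun j _ => by ring
    rw [this]
    refine IsUltrametricDist.norm_sum_le_of_forall_le_of_nonneg (by positivity)
      fun j _ => ?_
    rw [norm_mul, mul_comm]
    exact mul_le_mul (hQ2 v x hvx _ _) (hzM v hv j) (norm_nonneg _) (le_of_lt hppos')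
  have : (1 + A) / (1 + B) - 1 = (A - B) / (1 + B) := by
    field_simp
    ring
  rw [this, norm_div, hden, div_one]
  exact hdiff
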